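/- (Pointwise Gaussian approximation in the low-regularity regime; inequality (eq:estm5) in the proof of Theorem 4.2.) Let m ≥ 1, let α ∈ (0,1], and let φ : ℝ^{2m} → ℂ be an admissible characteristic function with covariance data ν_1,…,ν_m ≥ 1 which is twice continuously differentiable on the closed ball B̄(0,ε₀) for some ε₀ > 0 with every second-order partial derivative α-Hölder continuous on B̄(0,ε₀). Then there exist ε ∈ (0,ε₀] and a constant C > 0 such that for every integer n ≥ 1 and every z ∈ ℝ^{2m} with ‖z‖ ≤ √n·ε, |φ(z/√n)^n − G_ν(z)| ≤ C·‖z‖^{2+α}·n^{−α/2}·e^{−‖z‖²/4}. -/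

import Mathlib

open MeasureTheory Filter Asymptotics Metric

noncomputable section

/-- The quadratic form `Σ_j ν_j (x_j² + y_j²)` on `ℝ^{2m} ≃ ℝ^m × ℝ^m`,
identifying `ℂ^m` with `ℝ^{2m}` via `z = (x, y)`. -/
def quadForm (m : ℕ) (ν : Fin m → ℝ) (z : EuclideanSpace ℝ (Fin m ⊕ Fin m)) : ℝ :=
  ∑ j : Fin m, ν j * ((z (Sum.inl j)) ^ 2 + (z (Sum.inr j)) ^ 2)

/-- The Gaussian limit `G_ν(z) = exp(−(1/2)·Σ_j ν_j(x_j² + y_j²))`. -/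
def gaussLimit (m : ℕ) (ν : Fin m → ℝ) (z : EuclideanSpace ℝ (Fin m ⊕ Fin m)) : ℝ :=
  Real.exp (-(1 / 2) * quadForm m ν z)

/-- `φ` is an admissible characteristic function with covariance data `ν`:
(i) continuous with `φ(0) = 1`; (ii) square-integrable; (iii) uniformly bounded away
from `1` in modulus outside any neighbourhood of the origin; (iv) with the quadratic
expansion `φ(z) = 1 − (1/2)·Σ_j ν_j(x_j² + y_j²) + o(‖z‖²)` at the origin. -/
structure IsAdmissibleCF (m : ℕ) (ν : Fin m → ℝ)
    (φ : EuclideanSpace ℝ (Fin m ⊕ Fin m) → ℂ) : Prop where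
  continuous : Continuous φ
  map_zero : φ 0 = 1
  sq_integrable : MemLp φ 2 (volume : Measure (EuclideanSpace ℝ (Fin m ⊕ Fin m)))
  strict_nonlattice : ∀ ε : ℝ, 0 < ε → ∃ η : ℝ, η < 1 ∧ ∀ z, ε ≤ ‖z‖ → ‖φ z‖ ≤ η
  quad_expansion :
    (fun z => φ z - ((1 - (1 / 2) * quadForm m ν z : ℝ) : ℂ))
      =o[nhds (0 : EuclideanSpace ℝ (Fin m ⊕ Fin m))] fun z => ‖z‖ ^ 2


section Helpers
open Set
variable {m : ℕ} {ν : Fin m → ℝ}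

variable {m : ℕ} {ν : Fin m → ℝ}

lemma norm_sq_eq (z : EuclideanSpace ℝ (Fin m ⊕ Fin m)) :
    ‖z‖ ^ 2 = ∑ i, (z i) ^ 2 := by
  rw [EuclideanSpace.norm_eq, Real.sq_sqrt (by positivity)]
  simp [sq_abs]

lemma norm_sq_le_quadForm (hν : ∀ j, 1 ≤ ν j) (z : EuclideanSpace ℝ (Fin m ⊕ Fin m)) :
    ‖z‖ ^ 2 ≤ quadForm m ν z := by
  rw [norm_sq_eq, Fintype.sum_sum_type, quadForm, ← Finset.sum_add_distrib]
  refine Finset.sum_le_sum fun j _ => ?_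
  nlinarith [hν j, sq_nonneg (z (Sum.inl j)), sq_nonneg (z (Sum.inr j))]

lemma quadForm_nonneg (hν : ∀ j, 1 ≤ ν j) (z : EuclideanSpace ℝ (Fin m ⊕ Fin m)) :
    0 ≤ quadForm m ν z :=
  le_trans (by positivity) (norm_sq_le_quadForm hν z)

lemma quadForm_le (hν : ∀ j, 1 ≤ ν j) (z : EuclideanSpace ℝ (Fin m ⊕ Fin m)) :
    quadForm m ν z ≤ (∑ j, ν j) * ‖z‖ ^ 2 := by
  rw [norm_sq_eq, Fintype.sum_sum_type, quadForm]
  have h : ∀ j : Fin m, ν j ≤ ∑ i, ν i := fun j =>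
    Finset.single_le_sum (fun i _ => le_trans zero_le_one (hν i)) (Finset.mem_univ j)
  rw [← Finset.sum_add_distrib, Finset.mul_sum]
  refine Finset.sum_le_sum fun j _ => ?_
  nlinarith [h j, hν j, sq_nonneg (z (Sum.inl j)), sq_nonneg (z (Sum.inr j))]

lemma quadForm_smul (c : ℝ) (z : EuclideanSpace ℝ (Fin m ⊕ Fin m)) :
    quadForm m ν (c • z) = c ^ 2 * quadForm m ν z := by
  simp only [quadForm, PiLp.smul_apply, smul_eq_mul, mul_pow, Finset.mul_sum]
  congr 1; ext j; ring

lemma pow_sub_pow_bound (a b : ℂ) (M : ℝ) (ha : ‖a‖ ≤ M) (hb : ‖b‖ ≤ M) :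
    ∀ n : ℕ, ‖a ^ (n + 1) - b ^ (n + 1)‖ ≤ (n + 1) * M ^ n * ‖a - b‖ := by
  have hM : 0 ≤ M := le_trans (norm_nonneg a) ha
  intro n
  induction n with
  | zero => simp
  | succ n ih =>
    have key : a ^ (n + 2) - b ^ (n + 2)
        = a * (a ^ (n + 1) - b ^ (n + 1)) + (a - b) * b ^ (n + 1) := by ring
    calc ‖a ^ (n + 2) - b ^ (n + 2)‖
        ≤ ‖a * (a ^ (n + 1) - b ^ (n + 1))‖ + ‖(a - b) * b ^ (n + 1)‖ := by
          rw [key]; exact norm_add_le _ _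
      _ ≤ M * ((n + 1) * M ^ n * ‖a - b‖) + ‖a - b‖ * M ^ (n + 1) := by
          rw [norm_mul, norm_mul, norm_pow]
          gcongr
      _ ≤ ((n + 1 : ℕ) + 1) * M ^ (n + 1) * ‖a - b‖ := by
          rw [pow_succ]; push_cast; nlinarith [norm_nonneg (a - b), pow_nonneg hM n]


lemma taylor_holder {E : Type*} [NormedAddCommGroup E] [NormedSpace ℝ E]
    {φ : E → ℂ} {ε₀ K α : ℝ} (hε₀ : 0 < ε₀) (hα₀ : 0 < α) (hα₁ : α ≤ 1) (hK : 0 ≤ K)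
    (hreg : ContDiffOn ℝ 2 φ (closedBall 0 ε₀))
    (hH : ∀ x ∈ closedBall (0:E) ε₀, ∀ y ∈ closedBall (0:E) ε₀,
      ‖iteratedFDerivWithin ℝ 2 φ (closedBall 0 ε₀) x
        - iteratedFDerivWithin ℝ 2 φ (closedBall 0 ε₀) y‖ ≤ K * ‖x - y‖ ^ α)
    (w : E) (hw : ‖w‖ ≤ ε₀ / 2) :
    ‖φ w - (φ 0 + fderiv ℝ φ 0 w + (1/2 : ℝ) • iteratedFDeriv ℝ 2 φ 0 ![w, w])‖
      ≤ K * (‖w‖ ^ 2 * ‖w‖ ^ α) := by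
  have hball : ∀ t ∈ Icc (0:ℝ) 1, t • w ∈ ball (0:E) ε₀ := by
    intro t ht
    simp only [mem_ball, dist_zero_right, norm_smul, Real.norm_eq_abs,
      abs_of_nonneg ht.1]
    calc t * ‖w‖ ≤ 1 * (ε₀ / 2) := by
          exact mul_le_mul ht.2 hw (norm_nonneg w) zero_le_one
      _ < ε₀ := by linarith
  have hnhds : ∀ x ∈ ball (0:E) ε₀, closedBall (0:E) ε₀ ∈ nhds x := fun x hx =>
    Filter.mem_of_superset (isOpen_ball.mem_nhds hx) ball_subset_closedBall
  have hCD : ∀ x ∈ ball (0:E) ε₀, ContDiffAt ℝ 2 φ x := fun x hx =>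
    hreg.contDiffAt (hnhds x hx)
  have hIt : ∀ x ∈ ball (0:E) ε₀,
      iteratedFDerivWithin ℝ 2 φ (closedBall 0 ε₀) x = iteratedFDeriv ℝ 2 φ x := by
    intro x hx
    rw [← Set.univ_inter (closedBall (0:E) ε₀), iteratedFDerivWithin_inter (hnhds x hx),
      iteratedFDerivWithin_univ]
  have hH' : ∀ x ∈ ball (0:E) ε₀, ∀ y ∈ ball (0:E) ε₀,
      ‖iteratedFDeriv ℝ 2 φ x - iteratedFDeriv ℝ 2 φ y‖ ≤ K * ‖x - y‖ ^ α := by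
    intro x hx y hy
    rw [← hIt x hx, ← hIt y hy]
    exact hH x (ball_subset_closedBall hx) y (ball_subset_closedBall hy)
  have h0ball : (0:E) ∈ ball (0:E) ε₀ := mem_ball_self hε₀
  set B : ℂ := iteratedFDeriv ℝ 2 φ 0 ![w, w] with hB
  set h₁ : ℝ → ℂ := fun t => fderiv ℝ φ (t • w) w with hh₁
  have hline : ∀ t : ℝ, HasDerivAt (fun s : ℝ => s • w) w t := by
    intro t
    simpa using (hasDerivAt_id t).smul_const w
  have hd1 : ∀ t ∈ Icc (0:ℝ) 1, HasDerivAt (fun s => φ (s • w)) (h₁ t) t := by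
    intro t ht
    have hdiff : HasFDerivAt φ (fderiv ℝ φ (t • w)) (t • w) :=
      ((hCD _ (hball t ht)).differentiableAt (by norm_num)).hasFDerivAt
    exact hdiff.comp_hasDerivAt t (hline t)
  have hd2 : ∀ t ∈ Icc (0:ℝ) 1,
      HasDerivAt h₁ (iteratedFDeriv ℝ 2 φ (t • w) ![w, w]) t := by
    intro t ht
    have hcd1 : ContDiffAt ℝ 1 (fderiv ℝ φ) (t • w) :=
      (hCD _ (hball t ht)).fderiv_right (by norm_num)
    have hdiff : HasFDerivAt (fderiv ℝ φ) (fderiv ℝ (fderiv ℝ φ) (t • w)) (t • w) :=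
      (hcd1.differentiableAt (by norm_num)).hasFDerivAt
    have hcomp : HasDerivAt (fun s : ℝ => fderiv ℝ φ (s • w))
        (fderiv ℝ (fderiv ℝ φ) (t • w) w) t := hdiff.comp_hasDerivAt t (hline t)
    have := hcomp.clm_apply (hasDerivAt_const t w)
    simp only [map_zero, add_zero] at this
    have heq : iteratedFDeriv ℝ 2 φ (t • w) ![w, w]
        = fderiv ℝ (fderiv ℝ φ) (t • w) w w := by
      rw [iteratedFDeriv_two_apply]
      simp
    rw [heq]
    exact this
  -- second derivative deviation bound
  have hdev : ∀ s ∈ Icc (0:ℝ) 1,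
      ‖iteratedFDeriv ℝ 2 φ (s • w) ![w, w] - B‖ ≤ (K * (‖w‖ ^ α * ‖w‖ ^ 2)) := by
    intro s hs
    have : iteratedFDeriv ℝ 2 φ (s • w) ![w, w] - B
        = (iteratedFDeriv ℝ 2 φ (s • w) - iteratedFDeriv ℝ 2 φ 0) ![w, w] := by
      simp [hB]
    rw [this]
    calc ‖(iteratedFDeriv ℝ 2 φ (s • w) - iteratedFDeriv ℝ 2 φ 0) ![w, w]‖
        ≤ ‖iteratedFDeriv ℝ 2 φ (s • w) - iteratedFDeriv ℝ 2 φ 0‖ * ∏ i, ‖(![w, w]) i‖ :=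
          ContinuousMultilinearMap.le_opNorm _ _
      _ ≤ (K * ‖s • w - 0‖ ^ α) * (‖w‖ * ‖w‖) := by
          rw [Fin.prod_univ_two]
          refine mul_le_mul (hH' _ (hball s hs) _ h0ball) (le_of_eq (by simp))
            (by positivity) (by positivity)
      _ ≤ (K * (‖w‖ ^ α * ‖w‖ ^ 2)) := by
          have hsw : ‖s • w - 0‖ ≤ ‖w‖ := by
            rw [sub_zero, norm_smul, Real.norm_eq_abs, abs_of_nonneg hs.1]
            calc s * ‖w‖ ≤ 1 * ‖w‖ := by
                  exact mul_le_mul_of_nonneg_right hs.2 (norm_nonneg w)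
              _ = ‖w‖ := one_mul _
          have h1 : ‖s • w - 0‖ ^ α ≤ ‖w‖ ^ α :=
            Real.rpow_le_rpow (norm_nonneg _) hsw hα₀.le
          calc K * ‖s • w - 0‖ ^ α * (‖w‖ * ‖w‖)
              ≤ K * ‖w‖ ^ α * (‖w‖ * ‖w‖) := by
                gcongr
            _ = K * (‖w‖ ^ α * ‖w‖ ^ 2) := by ring
  -- first MVT : bound on h₁ t - h₁ 0 - t • B
  set C : ℝ := K * (‖w‖ ^ α * ‖w‖ ^ 2) with hC
  have hC0 : 0 ≤ C := by positivity
  have hBt : ∀ t : ℝ, HasDerivAt (fun s : ℝ => s • B) B t := by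
    intro t; simpa using (hasDerivAt_id t).smul_const B
  have hG : ∀ t ∈ Icc (0:ℝ) 1, ‖h₁ t - h₁ 0 - t • B‖ ≤ C * t := by
    have key := norm_image_sub_le_of_norm_deriv_le_segment'
      (f := fun t : ℝ => h₁ t - t • B)
      (f' := fun t : ℝ => iteratedFDeriv ℝ 2 φ (t • w) ![w, w] - B)
      (a := 0) (b := 1)
      (fun t ht => ((hd2 t ht).sub (hBt t)).hasDerivWithinAt)
      (fun t ht => hdev t (Ico_subset_Icc_self ht))
    intro t ht
    have := key t ht
    simpa only [zero_smul, sub_zero, sub_right_comm, sub_zero] using this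
  -- second MVT
  have hF : ∀ t ∈ Icc (0:ℝ) 1,
      HasDerivWithinAt (fun t : ℝ => φ (t • w) - t • (h₁ 0) - ((t ^ 2 / 2)) • B)
        (h₁ t - h₁ 0 - t • B) (Icc (0:ℝ) 1) t := by
    intro t ht
    have d1 : HasDerivAt (fun t : ℝ => t • (h₁ 0)) (h₁ 0) t := by
      simpa using (hasDerivAt_id t).smul_const (h₁ 0)
    have d2 : HasDerivAt (fun t : ℝ => (t ^ 2 / 2) • B) (t • B) t := by
      have : HasDerivAt (fun t : ℝ => t ^ 2 / 2) t t := by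
        simpa using (hasDerivAt_pow 2 t).div_const 2
      simpa using this.smul_const B
    have := ((hd1 t ht).sub d1).sub d2
    have heq : h₁ t - h₁ 0 - t • B = h₁ t - h₁ 0 - t • B := rfl
    exact this.hasDerivWithinAt
  have hG' : ∀ t ∈ Ico (0:ℝ) 1, ‖h₁ t - h₁ 0 - t • B‖ ≤ C := by
    intro t ht
    refine le_trans (hG t (Ico_subset_Icc_self ht)) ?_
    calc C * t ≤ C * 1 := mul_le_mul_of_nonneg_left ht.2.le hC0
      _ = C := mul_one _
  have key2 := norm_image_sub_le_of_norm_deriv_le_segment' (C := C) hF hG'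
      1 (by constructor <;> norm_num)
  have hF1 : (fun t : ℝ => φ (t • w) - t • (h₁ 0) - ((t ^ 2 / 2)) • B) 1
      - (fun t : ℝ => φ (t • w) - t • (h₁ 0) - ((t ^ 2 / 2)) • B) 0
      = φ w - (φ 0 + fderiv ℝ φ 0 w + (1/2 : ℝ) • B) := by
    simp only [hh₁, one_smul, zero_smul, sub_zero, one_pow, zero_div]
    norm_num
    abel
  rw [hF1] at key2
  calc ‖φ w - (φ 0 + fderiv ℝ φ 0 w + (1/2 : ℝ) • B)‖ ≤ C * (1 - 0) := key2
    _ = K * (‖w‖ ^ α * ‖w‖ ^ 2) := by rw [hC]; ring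
    _ ≤ K * (‖w‖ ^ 2 * ‖w‖ ^ α) := by ring_nf; exact le_refl _

lemma small_const_of_littleO {c : ℂ} {g : ℝ → ℝ}
    (hg : ∀ t ∈ Ioi (0:ℝ), 0 < g t)
    (h : (fun t : ℝ => g t • c) =o[nhdsWithin 0 (Ioi (0:ℝ))] g) : c = 0 := by
  rw [← norm_eq_zero]
  by_contra hc
  have hc' : 0 < ‖c‖ := lt_of_le_of_ne (norm_nonneg c) (Ne.symm hc)
  have := (isLittleO_iff.1 h) (half_pos hc')
  obtain ⟨t, h1, h2⟩ := (this.and (eventually_mem_nhdsWithin)).exists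
  rw [norm_smul, Real.norm_eq_abs, abs_of_pos (hg t h2)] at h1
  nlinarith [hg t h2, hc']

lemma ray_vanish {c d : ℂ}
    (h : (fun t : ℝ => t • c + (t ^ 2) • d) =o[nhdsWithin 0 (Ioi (0:ℝ))]
      fun t => t ^ 2) : c = 0 ∧ d = 0 := by
  have hsqo : (fun t : ℝ => t ^ 2) =o[nhdsWithin 0 (Ioi (0:ℝ))] fun t => t := by
    rw [isLittleO_iff]
    intro ε hε
    filter_upwards [Ioo_mem_nhdsGT_of_mem (⟨le_refl 0, hε⟩ : (0:ℝ) ∈ Ico 0 ε)] with t ht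
    simp only [Real.norm_eq_abs]
    rw [abs_of_pos (pow_pos ht.1 2), abs_of_pos ht.1, sq]
    nlinarith [ht.1, ht.2]
  have hdO : (fun t : ℝ => (t ^ 2) • d) =O[nhdsWithin 0 (Ioi (0:ℝ))] fun t => t ^ 2 := by
    rw [isBigO_iff]
    refine ⟨‖d‖, ?_⟩
    filter_upwards with t
    rw [norm_smul]
    simp [mul_comm]
  have hc1 : (fun t : ℝ => t • c) =o[nhdsWithin 0 (Ioi (0:ℝ))] fun t => t := by
    have := (h.trans hsqo).sub (hdO.trans_isLittleO hsqo)
    simpa using this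
  have hc0 : c = 0 := small_const_of_littleO (fun t ht => ht) (by simpa using hc1)
  subst hc0
  simp only [smul_zero, zero_add] at h
  exact ⟨rfl, small_const_of_littleO (fun t ht => pow_pos ht 2) h⟩

lemma glue {φ : EuclideanSpace ℝ (Fin m ⊕ Fin m) → ℂ} {r K α : ℝ}
    (hr : 0 < r) (hα₀ : 0 < α) (hφ0 : φ 0 = 1)
    (hquad : (fun z => φ z - ((1 - (1 / 2) * quadForm m ν z : ℝ) : ℂ))
      =o[nhds (0 : EuclideanSpace ℝ (Fin m ⊕ Fin m))] fun z => ‖z‖ ^ 2)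
    (htaylor : ∀ w : EuclideanSpace ℝ (Fin m ⊕ Fin m), ‖w‖ ≤ r →
      ‖φ w - (φ 0 + fderiv ℝ φ 0 w
        + (1/2 : ℝ) • iteratedFDeriv ℝ 2 φ 0 ![w, w])‖ ≤ K * (‖w‖ ^ 2 * ‖w‖ ^ α)) :
    ∀ w : EuclideanSpace ℝ (Fin m ⊕ Fin m), ‖w‖ ≤ r →
      ‖φ w - ((1 - (1 / 2) * quadForm m ν w : ℝ) : ℂ)‖ ≤ K * (‖w‖ ^ 2 * ‖w‖ ^ α) := by
  set L : EuclideanSpace ℝ (Fin m ⊕ Fin m) →L[ℝ] ℂ := fderiv ℝ φ 0 with hL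
  set q : EuclideanSpace ℝ (Fin m ⊕ Fin m) → ℂ := fun w => (1/2 : ℝ) • iteratedFDeriv ℝ 2 φ 0 ![w, w] with hq
  have hO : (fun w => φ w - (φ 0 + L w + q w)) =O[nhds (0 : EuclideanSpace ℝ (Fin m ⊕ Fin m))]
      fun w => ‖w‖ ^ 2 * ‖w‖ ^ α := by
    rw [isBigO_iff]
    refine ⟨K, ?_⟩
    filter_upwards [closedBall_mem_nhds (0 : EuclideanSpace ℝ (Fin m ⊕ Fin m)) hr] with w hw
    rw [Real.norm_eq_abs, abs_of_nonneg (by positivity)]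
    exact htaylor w (by simpa [dist_eq_norm] using hw)
  have htend : Filter.Tendsto (fun w : EuclideanSpace ℝ (Fin m ⊕ Fin m) => ‖w‖ ^ α) (nhds 0) (nhds 0) := by
    have h1 : Filter.Tendsto (fun w : EuclideanSpace ℝ (Fin m ⊕ Fin m) => ‖w‖) (nhds 0) (nhds 0) := tendsto_norm_zero
    have h2 : ContinuousAt (fun x : ℝ => x ^ α) 0 :=
      Real.continuousAt_rpow_const 0 α (Or.inr hα₀.le)
    have := h2.tendsto.comp h1
    rwa [Real.zero_rpow hα₀.ne'] at this
  have ho2 : (fun w : EuclideanSpace ℝ (Fin m ⊕ Fin m) => ‖w‖ ^ 2 * ‖w‖ ^ α) =o[nhds (0 : EuclideanSpace ℝ (Fin m ⊕ Fin m))] fun w => ‖w‖ ^ 2 := by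
    have := (isBigO_refl (fun w : EuclideanSpace ℝ (Fin m ⊕ Fin m) => ‖w‖ ^ 2) (nhds 0)).mul_isLittleO
      ((isLittleO_one_iff ℝ).2 htend)
    simpa using this
  have hbig : (fun w => φ w - (φ 0 + L w + q w)) =o[nhds (0 : EuclideanSpace ℝ (Fin m ⊕ Fin m))] fun w => ‖w‖ ^ 2 :=
    hO.trans_isLittleO ho2
  have hdiff : (fun w => L w + (q w + ((2⁻¹ * quadForm m ν w : ℝ) : ℂ)))
      =o[nhds (0 : EuclideanSpace ℝ (Fin m ⊕ Fin m))] fun w => ‖w‖ ^ 2 := by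
    have h3 := hquad.sub hbig
    refine h3.congr' (Filter.Eventually.of_forall fun w => ?_)
      (Filter.Eventually.of_forall fun w => rfl)
    rw [hφ0]
    push_cast
    ring
  have hident : ∀ u : EuclideanSpace ℝ (Fin m ⊕ Fin m), L u = 0 ∧ q u + ((2⁻¹ * quadForm m ν u : ℝ) : ℂ) = 0 := by
    intro u
    have hρ : Filter.Tendsto (fun t : ℝ => t • u) (nhdsWithin 0 (Ioi (0:ℝ)))
        (nhds (0 : EuclideanSpace ℝ (Fin m ⊕ Fin m))) := by
      have hc : Continuous (fun t : ℝ => t • u) := continuous_id.smul continuous_const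
      have h4 := hc.tendsto 0
      rw [zero_smul] at h4
      exact h4.mono_left nhdsWithin_le_nhds
    have hcomp := hdiff.comp_tendsto hρ
    have hOq : (fun t : ℝ => ‖t • u‖ ^ 2) =O[nhdsWithin 0 (Ioi (0:ℝ))]
        fun t => t ^ 2 := by
      rw [isBigO_iff]
      refine ⟨‖u‖ ^ 2, Filter.Eventually.of_forall fun t => ?_⟩
      have e1 : ‖(‖t • u‖) ^ 2‖ = t ^ 2 * ‖u‖ ^ 2 := by
        rw [Real.norm_eq_abs, abs_of_nonneg (sq_nonneg _), norm_smul, mul_pow,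
          Real.norm_eq_abs, sq_abs]
      have e2 : ‖t ^ 2‖ = t ^ 2 := by
        rw [Real.norm_eq_abs, abs_of_nonneg (sq_nonneg t)]
      rw [e1, e2]
      exact le_of_eq (by ring)
    have ho : (fun t : ℝ => L (t • u) + (q (t • u) + ((2⁻¹ * quadForm m ν (t • u) : ℝ) : ℂ)))
        =o[nhdsWithin 0 (Ioi (0:ℝ))] fun t => t ^ 2 := hcomp.trans_isBigO hOq
    have hid : (fun t : ℝ => L (t • u) + (q (t • u) + ((2⁻¹ * quadForm m ν (t • u) : ℝ) : ℂ)))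
        = fun t : ℝ => t • (L u : ℂ) + (t ^ 2) • (q u + ((2⁻¹ * quadForm m ν u : ℝ) : ℂ)) := by
      funext t
      have harg : (![t • u, t • u] : Fin 2 → EuclideanSpace ℝ (Fin m ⊕ Fin m)) = fun i => t • (![u, u] i) := by
        funext i; fin_cases i <;> simp
      have hmul : iteratedFDeriv ℝ 2 φ 0 ![t • u, t • u]
          = (t ^ 2) • iteratedFDeriv ℝ 2 φ 0 ![u, u] := by
        rw [harg, (iteratedFDeriv ℝ 2 φ 0).map_smul_univ]
        congr 1
        simp [Fin.prod_univ_two, sq]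
      have hq' : q (t • u) = (t ^ 2) • q u := by
        rw [hq]
        simp only
        rw [hmul, smul_comm]
      have hQ : ((2⁻¹ * quadForm m ν (t • u) : ℝ) : ℂ)
          = (t ^ 2) • ((2⁻¹ * quadForm m ν u : ℝ) : ℂ) := by
        rw [quadForm_smul]
        push_cast [Complex.real_smul]
        ring
      rw [hq', hQ, L.map_smul, ← smul_add]
    rw [hid] at ho
    exact ray_vanish ho
  intro w hw
  have hLw := (hident w).1
  have hqw := (hident w).2
  have heq : φ 0 + L w + q w = ((1 - (1 / 2) * quadForm m ν w : ℝ) : ℂ) := by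
    rw [hφ0, hLw]
    have hq2 : q w = -((2⁻¹ * quadForm m ν w : ℝ) : ℂ) := by
      linear_combination hqw
    rw [hq2]
    push_cast
    ring
  have hfin := htaylor w hw
  rwa [heq] at hfin

end Helpers

set_option maxHeartbeats 1600000 in
/-- Pointwise Gaussian approximation in the low-regularity regime (inequality
(eq:estm5) in the proof of Theorem 4.2): if `φ` is an admissible characteristic
function which is `C²` on a closed ball of radius `ε₀` with α-Hölder continuous
second derivatives there, then there are `ε ∈ (0, ε₀]` and `C > 0` such that for all
`n ≥ 1` and all `z` with `‖z‖ ≤ √n·ε`,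
`|φ(z/√n)ⁿ − G_ν(z)| ≤ C·‖z‖^{2+α}·n^{−α/2}·exp(−‖z‖²/4)`. -/
theorem pointwise_gaussian_approx_low_regularity
    (m : ℕ) (hm : 1 ≤ m) (α : ℝ) (hα₀ : 0 < α) (hα₁ : α ≤ 1)
    (ν : Fin m → ℝ) (hν : ∀ j, 1 ≤ ν j)
    (φ : EuclideanSpace ℝ (Fin m ⊕ Fin m) → ℂ)
    (hφ : IsAdmissibleCF m ν φ)
    (ε₀ : ℝ) (hε₀ : 0 < ε₀)
    (hreg : ContDiffOn ℝ 2 φ (closedBall 0 ε₀))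
    (hHolder : ∃ K : ℝ, ∀ z ∈ closedBall (0 : EuclideanSpace ℝ (Fin m ⊕ Fin m)) ε₀,
      ∀ w ∈ closedBall (0 : EuclideanSpace ℝ (Fin m ⊕ Fin m)) ε₀,
        ‖iteratedFDerivWithin ℝ 2 φ (closedBall 0 ε₀) z
          - iteratedFDerivWithin ℝ 2 φ (closedBall 0 ε₀) w‖ ≤ K * ‖z - w‖ ^ α) :
    ∃ ε : ℝ, 0 < ε ∧ ε ≤ ε₀ ∧ ∃ C : ℝ, 0 < C ∧ ∀ n : ℕ, 1 ≤ n →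
      ∀ z : EuclideanSpace ℝ (Fin m ⊕ Fin m), ‖z‖ ≤ Real.sqrt n * ε →
        ‖φ ((Real.sqrt n)⁻¹ • z) ^ n - (gaussLimit m ν z : ℂ)‖
          ≤ C * ‖z‖ ^ (2 + α) * (n : ℝ) ^ (-(α / 2)) * Real.exp (-‖z‖ ^ 2 / 4) := by
  classical
  obtain ⟨K₀, hH₀⟩ := hHolder
  set K : ℝ := max K₀ 0 with hKdef
  have hK0 : (0:ℝ) ≤ K := le_max_right _ _
  have hH : ∀ x ∈ closedBall (0 : EuclideanSpace ℝ (Fin m ⊕ Fin m)) ε₀,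
      ∀ y ∈ closedBall (0 : EuclideanSpace ℝ (Fin m ⊕ Fin m)) ε₀,
      ‖iteratedFDerivWithin ℝ 2 φ (closedBall 0 ε₀) x
        - iteratedFDerivWithin ℝ 2 φ (closedBall 0 ε₀) y‖ ≤ K * ‖x - y‖ ^ α := by
    intro x hx y hy
    exact le_trans (hH₀ x hx y hy)
      (mul_le_mul_of_nonneg_right (le_max_left _ _) (Real.rpow_nonneg (norm_nonneg _) α))
  have htay := fun w hw => taylor_holder hε₀ hα₀ hα₁ hK0 hreg hH w hw
  have hKey := glue (m := m) (ν := ν) (by linarith : (0:ℝ) < ε₀/2) hα₀ hφ.map_zero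
    hφ.quad_expansion htay
  set N : ℝ := ∑ j, ν j with hNdef
  have hN1 : (1:ℝ) ≤ N := by
    calc (1:ℝ) ≤ ν ⟨0, hm⟩ := hν _
      _ ≤ N := Finset.single_le_sum (fun i _ => by linarith [hν i]) (Finset.mem_univ _)
  have hN0 : (0:ℝ) < N := lt_of_lt_of_le one_pos hN1
  have hQle : ∀ w, quadForm m ν w ≤ N * ‖w‖ ^ 2 := quadForm_le hν
  have hQge : ∀ w, ‖w‖ ^ 2 ≤ quadForm m ν w := norm_sq_le_quadForm hν
  have hQ0 : ∀ w, 0 ≤ quadForm m ν w := quadForm_nonneg hν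
  set δ : ℝ := ((4*(K+1))⁻¹) ^ (α⁻¹ : ℝ) with hδdef
  have hδ0 : 0 < δ := Real.rpow_pos_of_pos (by positivity) _
  set ε : ℝ := min (ε₀/2) (min 1 (min (Real.sqrt (2/N)) δ)) with hεdef
  have hε0 : 0 < ε := lt_min (by linarith)
    (lt_min one_pos (lt_min (Real.sqrt_pos.2 (by positivity)) hδ0))
  refine ⟨ε, hε0, le_trans (min_le_left _ _) (by linarith), ?_⟩
  have hεhalf : ε ≤ ε₀/2 := min_le_left _ _
  have hε1 : ε ≤ 1 := le_trans (min_le_right _ _) (min_le_left _ _)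
  have hεsqrt : ε ≤ Real.sqrt (2/N) :=
    le_trans (min_le_right _ _) (le_trans (min_le_right _ _) (min_le_left _ _))
  have hεδ : ε ≤ δ :=
    le_trans (min_le_right _ _) (le_trans (min_le_right _ _) (min_le_right _ _))
  have hw2 : ∀ w : EuclideanSpace ℝ (Fin m ⊕ Fin m), ‖w‖ ≤ ε → quadForm m ν w ≤ 2 := by
    intro w hw
    have hs := Real.sq_sqrt (le_of_lt (show (0:ℝ) < 2/N by positivity))
    have h1 : ‖w‖ ^ 2 ≤ 2/N := by
      nlinarith [norm_nonneg w, hεsqrt, Real.sqrt_nonneg (2/N), hε0]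
    calc quadForm m ν w ≤ N * ‖w‖ ^ 2 := hQle w
      _ ≤ N * (2/N) := by nlinarith
      _ = 2 := by field_simp
  have hwα : ∀ w : EuclideanSpace ℝ (Fin m ⊕ Fin m), ‖w‖ ≤ ε → K * ‖w‖ ^ α ≤ 1/4 := by
    intro w hw
    have h1 : ‖w‖ ^ α ≤ δ ^ α :=
      Real.rpow_le_rpow (norm_nonneg _) (le_trans hw hεδ) hα₀.le
    have h2 : δ ^ α = (4*(K+1))⁻¹ := by
      rw [hδdef, ← Real.rpow_mul (by positivity), inv_mul_cancel₀ hα₀.ne', Real.rpow_one]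
    have h3 : (0:ℝ) < 4*(K+1) := by positivity
    calc K * ‖w‖ ^ α ≤ K * (4*(K+1))⁻¹ := by
          rw [← h2]; exact mul_le_mul_of_nonneg_left h1 hK0
      _ ≤ 1/4 := by
          rw [inv_eq_one_div, mul_one_div, div_le_div_iff₀ h3 (by norm_num)]
          linarith
  have hsq_le : ∀ w : EuclideanSpace ℝ (Fin m ⊕ Fin m), ‖w‖ ≤ ε →
      ‖w‖ ^ 2 ≤ ‖w‖ ^ α := by
    intro w hw
    rcases eq_or_lt_of_le (norm_nonneg w) with h0 | h0
    · rw [← h0, Real.zero_rpow hα₀.ne']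
      norm_num
    · have h2a : ‖w‖ ^ ((2:ℕ):ℝ) ≤ ‖w‖ ^ α := by
        apply Real.rpow_le_rpow_of_exponent_ge h0 (le_trans hw hε1)
        push_cast; linarith
      rwa [Real.rpow_natCast] at h2a
  -- the two per-step bounds
  have hstep : ∀ w : EuclideanSpace ℝ (Fin m ⊕ Fin m), ‖w‖ ≤ ε →
      ‖φ w - ((Real.exp (-(quadForm m ν w)/2) : ℝ) : ℂ)‖
        ≤ (K + N^2/4) * (‖w‖ ^ 2 * ‖w‖ ^ α)
      ∧ ‖φ w‖ ≤ Real.exp (-(quadForm m ν w)/4) := by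
    intro w hw
    have hwε₀ : ‖w‖ ≤ ε₀/2 := le_trans hw hεhalf
    have hkey := hKey w hwε₀
    have hq2 := hw2 w hw
    have hq0 := hQ0 w
    have hqw4 : K * (‖w‖ ^ 2 * ‖w‖ ^ α) ≤ quadForm m ν w / 4 := by
      have h1 := hwα w hw
      have h2 := hQge w
      nlinarith [sq_nonneg ‖w‖, Real.rpow_nonneg (norm_nonneg w) α]
    constructor
    · -- distance bound
      have hxabs : |(-(quadForm m ν w)/2)| ≤ 1 := by
        rw [abs_of_nonpos (by linarith)]; linarith
      have hexp : |Real.exp (-(quadForm m ν w)/2) - (1 - (1/2) * quadForm m ν w)|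
          ≤ (quadForm m ν w)^2/4 := by
        have h5 := Real.abs_exp_sub_one_sub_id_le hxabs
        have e : Real.exp (-(quadForm m ν w)/2) - (1 - (1/2) * quadForm m ν w)
            = Real.exp (-(quadForm m ν w)/2) - 1 - (-(quadForm m ν w)/2) := by ring
        rw [e]
        calc |Real.exp (-(quadForm m ν w)/2) - 1 - (-(quadForm m ν w)/2)|
            ≤ (-(quadForm m ν w)/2)^2 := h5
          _ = (quadForm m ν w)^2/4 := by ring
      have hQsq : (quadForm m ν w)^2/4 ≤ (N^2/4) * (‖w‖ ^ 2 * ‖w‖ ^ α) := by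
        have h1 := hQle w
        have h2 := hsq_le w hw
        have h3 : (quadForm m ν w)^2 ≤ (N * ‖w‖ ^ 2)^2 := by nlinarith
        calc (quadForm m ν w)^2/4 ≤ (N * ‖w‖ ^ 2)^2/4 := by linarith
          _ = (N^2/4) * (‖w‖ ^ 2 * ‖w‖ ^ 2) := by ring
          _ ≤ (N^2/4) * (‖w‖ ^ 2 * ‖w‖ ^ α) := by
              exact mul_le_mul_of_nonneg_left
                (mul_le_mul_of_nonneg_left h2 (by positivity)) (by positivity)
      have htri : ‖φ w - ((Real.exp (-(quadForm m ν w)/2) : ℝ) : ℂ)‖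
          ≤ ‖φ w - ((1 - (1 / 2) * quadForm m ν w : ℝ) : ℂ)‖
            + ‖((1 - (1 / 2) * quadForm m ν w : ℝ) : ℂ)
              - ((Real.exp (-(quadForm m ν w)/2) : ℝ) : ℂ)‖ := by
        have e : φ w - ((Real.exp (-(quadForm m ν w)/2) : ℝ) : ℂ)
            = (φ w - ((1 - (1 / 2) * quadForm m ν w : ℝ) : ℂ))
              + (((1 - (1 / 2) * quadForm m ν w : ℝ) : ℂ)
                - ((Real.exp (-(quadForm m ν w)/2) : ℝ) : ℂ)) := by ring
        rw [e]; exact norm_add_le _ _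
      have hsecond : ‖((1 - (1 / 2) * quadForm m ν w : ℝ) : ℂ)
          - ((Real.exp (-(quadForm m ν w)/2) : ℝ) : ℂ)‖ ≤ (quadForm m ν w)^2/4 := by
        rw [← Complex.ofReal_sub, Complex.norm_real, Real.norm_eq_abs, abs_sub_comm]
        exact hexp
      calc ‖φ w - ((Real.exp (-(quadForm m ν w)/2) : ℝ) : ℂ)‖
          ≤ K * (‖w‖ ^ 2 * ‖w‖ ^ α) + (quadForm m ν w)^2/4 := by
            have := htri
            linarith [hkey, hsecond]
        _ ≤ K * (‖w‖ ^ 2 * ‖w‖ ^ α) + (N^2/4) * (‖w‖ ^ 2 * ‖w‖ ^ α) := by linarith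
        _ = (K + N^2/4) * (‖w‖ ^ 2 * ‖w‖ ^ α) := by ring
    · -- modulus bound
      have e : φ w = ((1 - (1 / 2) * quadForm m ν w : ℝ) : ℂ)
          + (φ w - ((1 - (1 / 2) * quadForm m ν w : ℝ) : ℂ)) := by ring
      have h1 : ‖((1 - (1 / 2) * quadForm m ν w : ℝ) : ℂ)‖ = 1 - (1/2) * quadForm m ν w := by
        rw [Complex.norm_real, Real.norm_eq_abs, abs_of_nonneg (by linarith)]
      calc ‖φ w‖ ≤ ‖((1 - (1 / 2) * quadForm m ν w : ℝ) : ℂ)‖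
            + ‖φ w - ((1 - (1 / 2) * quadForm m ν w : ℝ) : ℂ)‖ := by
            nth_rewrite 1 [e]
            exact norm_add_le _ _
        _ ≤ (1 - (1/2) * quadForm m ν w) + quadForm m ν w / 4 := by
            rw [h1]; linarith [hkey, hqw4]
        _ = (-(quadForm m ν w)/4) + 1 := by ring
        _ ≤ Real.exp (-(quadForm m ν w)/4) := Real.add_one_le_exp _
  set C : ℝ := (K + N^2/4) * Real.exp (1/2) + 1 with hCdef
  have hC0 : 0 < C := by positivity
  refine ⟨C, hC0, ?_⟩
  intro n hn z hz
  have hn0 : (0:ℝ) < n := by exact_mod_cast hn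
  have hsn : 0 < Real.sqrt n := Real.sqrt_pos.2 hn0
  by_cases hz0 : z = 0
  · subst hz0
    have h1 : φ ((Real.sqrt n)⁻¹ • (0 : EuclideanSpace ℝ (Fin m ⊕ Fin m))) = 1 := by
      rw [smul_zero, hφ.map_zero]
    have h2 : gaussLimit m ν 0 = 1 := by
      have h3 : quadForm m ν (0 : EuclideanSpace ℝ (Fin m ⊕ Fin m)) = 0 := by
        simp [quadForm]
      rw [gaussLimit, h3, mul_zero, Real.exp_zero]
    rw [h1, h2, one_pow, Complex.ofReal_one, sub_self, norm_zero, norm_zero,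
      Real.zero_rpow (by positivity : (2:ℝ) + α ≠ 0)]
    simp
  · set s : ℝ := (Real.sqrt n)⁻¹ with hsdef
    have hs0 : 0 < s := by positivity
    set w := s • z with hwdef
    have hwnorm : ‖w‖ = s * ‖z‖ := by
      rw [hwdef, norm_smul, Real.norm_eq_abs, abs_of_pos hs0]
    have hwε : ‖w‖ ≤ ε := by
      rw [hwnorm]
      calc s * ‖z‖ ≤ s * (Real.sqrt n * ε) := mul_le_mul_of_nonneg_left hz hs0.le
        _ = ε := by rw [hsdef]; field_simp
    have hQw : quadForm m ν w = quadForm m ν z / n := by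
      rw [hwdef, quadForm_smul, hsdef, inv_pow, Real.sq_sqrt hn0.le]
      ring
    obtain ⟨hab, hA⟩ := hstep w hwε
    have hB : ‖((Real.exp (-(quadForm m ν w)/2) : ℝ) : ℂ)‖
        ≤ Real.exp (-(quadForm m ν w)/4) := by
      rw [Complex.norm_real, Real.norm_eq_abs, abs_of_pos (Real.exp_pos _)]
      exact Real.exp_le_exp.2 (by linarith [hQ0 w])
    obtain ⟨k, hk⟩ : ∃ k, n = k + 1 := ⟨n - 1, by omega⟩
    have key := pow_sub_pow_bound (φ w) ((Real.exp (-(quadForm m ν w)/2) : ℝ) : ℂ)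
      (Real.exp (-(quadForm m ν w)/4)) hA hB k
    have hbn : (((Real.exp (-(quadForm m ν w)/2) : ℝ) : ℂ)) ^ n
        = ((gaussLimit m ν z : ℝ) : ℂ) := by
      rw [← Complex.ofReal_pow, ← Real.exp_nat_mul]
      congr 1
      rw [hQw]
      simp only [gaussLimit]
      rw [Real.exp_eq_exp]
      field_simp
    have hMk : Real.exp (-(quadForm m ν w)/4) ^ k
        ≤ Real.exp (1/2) * Real.exp (-‖z‖^2/4) := by
      rw [← Real.exp_nat_mul]
      have h1 : (k:ℝ) * (-(quadForm m ν w)/4)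
          = -(quadForm m ν z)/4 + (quadForm m ν w)/4 := by
        rw [hQw]
        have hkr : (k:ℝ) = (n:ℝ) - 1 := by rw [hk]; push_cast; ring
        rw [hkr]
        field_simp
        ring
      rw [h1, Real.exp_add]
      have e2 : Real.exp (-(quadForm m ν z)/4) ≤ Real.exp (-‖z‖^2/4) :=
        Real.exp_le_exp.2 (by linarith [hQge z])
      have e3 : Real.exp ((quadForm m ν w)/4) ≤ Real.exp (1/2) :=
        Real.exp_le_exp.2 (by linarith [hw2 w hwε])
      calc Real.exp (-(quadForm m ν z)/4) * Real.exp ((quadForm m ν w)/4)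
          ≤ Real.exp (-‖z‖^2/4) * Real.exp (1/2) :=
            mul_le_mul e2 e3 (Real.exp_pos _).le (Real.exp_pos _).le
        _ = Real.exp (1/2) * Real.exp (-‖z‖^2/4) := mul_comm _ _
    have hz0' : 0 < ‖z‖ := norm_pos_iff.2 hz0
    have hnw : (n:ℝ) * (‖w‖ ^ 2 * ‖w‖ ^ α) = ‖z‖ ^ ((2:ℝ) + α) * (n:ℝ) ^ (-(α/2)) := by
      have hs2 : s ^ 2 = ((n:ℝ))⁻¹ := by rw [hsdef, inv_pow, Real.sq_sqrt hn0.le]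
      have hsα : s ^ α = (n:ℝ) ^ (-(α/2) : ℝ) := by
        have e1 : s = (n:ℝ) ^ (-(1/2) : ℝ) := by
          rw [hsdef, Real.rpow_neg hn0.le, Real.sqrt_eq_rpow]
        rw [e1, ← Real.rpow_mul hn0.le]
        congr 1
        ring
      have hzz : ‖z‖ ^ ((2:ℝ) + α) = ‖z‖ ^ 2 * ‖z‖ ^ α := by
        rw [Real.rpow_add hz0']
        congr 1
        rw [show ((2:ℝ)) = ((2:ℕ):ℝ) by norm_num, Real.rpow_natCast]
      rw [hwnorm, mul_pow, Real.mul_rpow hs0.le (norm_nonneg z), hs2, hsα, hzz]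
      field_simp
    calc ‖φ w ^ n - ((gaussLimit m ν z : ℝ) : ℂ)‖
        = ‖φ w ^ (k+1) - (((Real.exp (-(quadForm m ν w)/2) : ℝ) : ℂ)) ^ (k+1)‖ := by
          rw [← hbn, hk]
      _ ≤ ((k:ℝ)+1) * Real.exp (-(quadForm m ν w)/4) ^ k
            * ‖φ w - ((Real.exp (-(quadForm m ν w)/2) : ℝ) : ℂ)‖ := key
      _ ≤ (n:ℝ) * (Real.exp (1/2) * Real.exp (-‖z‖^2/4))
            * ((K + N^2/4) * (‖w‖ ^ 2 * ‖w‖ ^ α)) := by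
          have hkn : ((k:ℝ)+1) = (n:ℝ) := by rw [hk]; push_cast; ring
          rw [hkn]
          refine mul_le_mul (mul_le_mul_of_nonneg_left hMk hn0.le) hab
            (norm_nonneg _) (by positivity)
      _ = ((K + N^2/4) * Real.exp (1/2))
            * (((n:ℝ) * (‖w‖ ^ 2 * ‖w‖ ^ α)) * Real.exp (-‖z‖^2/4)) := by ring
      _ = ((K + N^2/4) * Real.exp (1/2))
            * ((‖z‖ ^ ((2:ℝ) + α) * (n:ℝ) ^ (-(α/2))) * Real.exp (-‖z‖^2/4)) := by
          rw [hnw]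
      _ ≤ C * ((‖z‖ ^ ((2:ℝ) + α) * (n:ℝ) ^ (-(α/2))) * Real.exp (-‖z‖^2/4)) := by
          have h1 : (K + N^2/4) * Real.exp (1/2) ≤ C := by rw [hCdef]; linarith
          have h2 : (0:ℝ) ≤ (‖z‖ ^ ((2:ℝ) + α) * (n:ℝ) ^ (-(α/2))) * Real.exp (-‖z‖^2/4) := by
            positivity
          exact mul_le_mul_of_nonneg_right h1 h2
      _ = C * ‖z‖ ^ ((2:ℝ) + α) * (n:ℝ) ^ (-(α/2)) * Real.exp (-‖z‖^2/4) := by ring
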